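/- For any two distinct vertices s, t ∈ V, there exists a unique (s,t)-mincut N such that N ⊆ A for every (s,t)-mincut A (the tight mincut from s to t), and there exists a unique (s,t)-mincut F such that A ⊆ F for every (s,t)-mincut A (the loose mincut from s to t). -/

import Mathlib

open Finset

/-- Capacity of the cut defined by `A`: number of edges with one endpoint in `A`
and the other outside `A`. -/
def cap {V : Type*} [Fintype V] [DecidableEq V] (w : V → V → ℕ) (A : Finset V) : ℕ :=
  ∑ a ∈ A, ∑ b ∈ Aᶜ, w a b

/-- A cut of `V` is a subset `A` with `∅ ≠ A ≠ V`. -/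
def IsCut {V : Type*} [Fintype V] (A : Finset V) : Prop :=
  A ≠ ∅ ∧ A ≠ Finset.univ

/-- An `S`-cut is a cut that divides `S`. -/
def IsSCut {V : Type*} [Fintype V] [DecidableEq V] (S A : Finset V) : Prop :=
  IsCut A ∧ (A ∩ S).Nonempty ∧ (S \ A).Nonempty

/-- An `S`-mincut is an `S`-cut of minimum capacity among all `S`-cuts. -/
def IsSMincut {V : Type*} [Fintype V] [DecidableEq V] (w : V → V → ℕ) (S A : Finset V) : Prop :=
  IsSCut S A ∧ ∀ B : Finset V, IsSCut S B → cap w A ≤ cap w B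

/-- `T ⊆ S` is a valid cut of `S` if some `S`-mincut `A` satisfies `A ∩ S = T`. -/
def IsValidCut {V : Type*} [Fintype V] [DecidableEq V] (w : V → V → ℕ) (S T : Finset V) : Prop :=
  ∃ A : Finset V, IsSMincut w S A ∧ A ∩ S = T

/-- A tight mincut for a valid cut `T` of `S`. -/
def IsTightMincut {V : Type*} [Fintype V] [DecidableEq V] (w : V → V → ℕ)
    (S T N : Finset V) : Prop :=
  IsSMincut w S N ∧ N ∩ S = T ∧ ∀ A : Finset V, IsSMincut w S A → A ∩ S = T → N ⊆ A

/-- A loose mincut for a valid cut `T` of `S`. -/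
def IsLooseMincut {V : Type*} [Fintype V] [DecidableEq V] (w : V → V → ℕ)
    (S T F : Finset V) : Prop :=
  IsSMincut w S F ∧ F ∩ S = T ∧ ∀ A : Finset V, IsSMincut w S A → A ∩ S = T → A ⊆ F

/-- An `(s,t)`-cut is a subset containing `s` but not `t`. -/
def IsSTCut {V : Type*} (s t : V) (A : Finset V) : Prop := s ∈ A ∧ t ∉ A

/-- An `(s,t)`-mincut is an `(s,t)`-cut of minimum capacity. -/
def IsSTMincut {V : Type*} [Fintype V] [DecidableEq V] (w : V → V → ℕ)
    (s t : V) (A : Finset V) : Prop :=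
  IsSTCut s t A ∧ ∀ B : Finset V, IsSTCut s t B → cap w A ≤ cap w B

lemma ind_submod (p q r u : Prop) [Decidable p] [Decidable q] [Decidable r] [Decidable u] (n : ℕ) :
    ((if (p ∧ r) ∧ ¬(q ∧ u) then n else 0) + (if (p ∨ r) ∧ ¬(q ∨ u) then n else 0)) ≤
    ((if p ∧ ¬q then n else 0) + (if r ∧ ¬u then n else 0)) := by
  by_cases hp : p <;> by_cases hq : q <;> by_cases hr : r <;> by_cases hu : u <;>
    simp [hp, hq, hr, hu]

lemma cap_eq {V : Type*} [Fintype V] [DecidableEq V] (w : V → V → ℕ) (A : Finset V) :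
    cap w A = ∑ u, ∑ v, if u ∈ A ∧ v ∉ A then w u v else 0 := by
  have h : ∀ u, (∑ v, if u ∈ A ∧ v ∉ A then w u v else 0)
      = if u ∈ A then ∑ v ∈ Aᶜ, w u v else 0 := by
    intro u
    split_ifs with h
    · simp only [h, true_and]
      rw [← Finset.sum_filter]
      congr 1
      ext v
      simp
    · simp [h]
  rw [Finset.sum_congr rfl (fun u _ => h u)]
  simp [Finset.sum_ite_mem, cap]

lemma cap_submod {V : Type*} [Fintype V] [DecidableEq V] (w : V → V → ℕ) (A B : Finset V) :
    cap w (A ∩ B) + cap w (A ∪ B) ≤ cap w A + cap w B := by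
  simp only [cap_eq, ← Finset.sum_add_distrib]
  refine Finset.sum_le_sum fun u _ => Finset.sum_le_sum fun v _ => ?_
  simp only [Finset.mem_inter, Finset.mem_union]
  exact ind_submod (u ∈ A) (v ∈ A) (u ∈ B) (v ∈ B) (w u v)

lemma pair_mincut {V : Type*} [Fintype V] [DecidableEq V] (w : V → V → ℕ) (s t : V)
    {A B : Finset V} (hA : IsSTMincut w s t A) (hB : IsSTMincut w s t B) :
    IsSTMincut w s t (A ∩ B) ∧ IsSTMincut w s t (A ∪ B) := by
  obtain ⟨⟨hsA, htA⟩, hAmin⟩ := hA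
  obtain ⟨⟨hsB, htB⟩, hBmin⟩ := hB
  have hIcut : IsSTCut s t (A ∩ B) := ⟨Finset.mem_inter.2 ⟨hsA, hsB⟩, fun h => htA (Finset.mem_inter.1 h).1⟩
  have hUcut : IsSTCut s t (A ∪ B) := ⟨Finset.mem_union_left _ hsA, fun h => (Finset.mem_union.1 h).elim htA htB⟩
  have hAB : cap w A = cap w B := le_antisymm (hAmin B ⟨hsB, htB⟩) (hBmin A ⟨hsA, htA⟩)
  have h1 := hAmin _ hIcut
  have h2 := hAmin _ hUcut
  have h3 := cap_submod w A B
  have hI : cap w (A ∩ B) = cap w A := by omega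
  have hU : cap w (A ∪ B) = cap w A := by omega
  exact ⟨⟨hIcut, fun C hC => hI ▸ hAmin C hC⟩, ⟨hUcut, fun C hC => hU ▸ hAmin C hC⟩⟩

/-- The tight and loose mincuts from `s` to `t` exist and are unique:
there is a unique `(s,t)`-mincut contained in all `(s,t)`-mincuts, and a unique
`(s,t)`-mincut containing all `(s,t)`-mincuts. -/
theorem tight_loose_st_mincut_exists_unique {V : Type*} [Fintype V] [DecidableEq V]
    (w : V → V → ℕ) (hsymm : ∀ u v : V, w u v = w v u) (hloop : ∀ v : V, w v v = 0)
    (s t : V) (hst : s ≠ t) :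
    (∃! N : Finset V, IsSTMincut w s t N ∧ ∀ A : Finset V, IsSTMincut w s t A → N ⊆ A) ∧
    (∃! F : Finset V, IsSTMincut w s t F ∧ ∀ A : Finset V, IsSTMincut w s t A → A ⊆ F) := by
  classical
  obtain ⟨A₀, hA₀mem, hA₀min⟩ := Finset.exists_min_image
    (univ.filter (fun A : Finset V => IsSTCut s t A)) (cap w)
    ⟨{s}, Finset.mem_filter.2 ⟨Finset.mem_univ _, Finset.mem_singleton_self s, by simpa using Ne.symm hst⟩⟩
  have hA₀ : IsSTMincut w s t A₀ :=
    ⟨(Finset.mem_filter.1 hA₀mem).2, fun B hB => hA₀min B (by simp [hB])⟩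
  set M : Finset (Finset V) := univ.filter (fun A : Finset V => IsSTMincut w s t A) with hMdef
  have hmem : ∀ A : Finset V, A ∈ M ↔ IsSTMincut w s t A := fun A => by simp [hMdef]
  have hMne : M.Nonempty := ⟨A₀, (hmem A₀).2 hA₀⟩
  have hinfM : ∀ (M' : Finset (Finset V)) (h : M'.Nonempty),
      (∀ A ∈ M', IsSTMincut w s t A) → IsSTMincut w s t (M'.inf id) ∧ IsSTMincut w s t (M'.sup id) := by
    intro M' h
    induction h using Finset.Nonempty.cons_induction with
    | singleton a => intro hall; simpa using hall a (by simp)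
    | cons a s' ha hs' ih =>
      intro hall
      have ha' := hall a (Finset.mem_cons_self _ _)
      have ⟨hi, hsu⟩ := ih (fun A hA => hall A (Finset.mem_cons_of_mem hA))
      rw [Finset.inf_cons, Finset.sup_cons]
      exact ⟨(pair_mincut w s t ha' hi).1, (pair_mincut w s t ha' hsu).2⟩
  obtain ⟨hN, hF⟩ := hinfM M hMne (fun A hA => (hmem A).1 hA)
  constructor
  · refine ⟨M.inf id, ⟨hN, fun A hA => Finset.le_iff_subset.mp (Finset.inf_le ((hmem A).2 hA))⟩, ?_⟩
    rintro N' ⟨hN', hmin'⟩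
    exact Finset.Subset.antisymm (hmin' _ hN) (Finset.le_iff_subset.mp (Finset.inf_le ((hmem N').2 hN')))
  · refine ⟨M.sup id, ⟨hF, fun A hA => Finset.le_iff_subset.mp (Finset.le_sup (f := id) ((hmem A).2 hA))⟩, ?_⟩
    rintro F' ⟨hF', hmax'⟩
    exact Finset.Subset.antisymm (Finset.le_iff_subset.mp (Finset.le_sup (f := id) ((hmem F').2 hF'))) (hmax' _ hF)
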